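/- Let T be a consistent theory in a countable first-order language. Suppose there is a family (p_A)_{A ⊆ ω} of partial types of T over the empty set, indexed by subsets of ω, such that each p_A is consistent with T and any two distinct p_A, p_B are jointly inconsistent (no element of any model can realise both). Then T has exactly 2^{ℵ₀} pairwise non-isomorphic countable models. -/

import Mathlib

open FirstOrder FirstOrder.Language Cardinal

universe u v

private theorem iso_of_diagram {L : FirstOrder.Language.{u, v}} {M N : Type (max u v)}
    [L.Structure M] [L.Structure N] {f : ℕ → M} {g : ℕ → N}
    (hf : Function.Surjective f) (hg : Function.Surjective g)
    (h : ∀ φ : L.Formula ℕ, φ.Realize f ↔ φ.Realize g) :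
    Nonempty (M ≃[L] N) := by
  classical
  have key1 : ∀ i j : ℕ, f i = f j ↔ g i = g j := by
    intro i j
    have := h (Term.equal (Term.var i) (Term.var j))
    simpa [Formula.realize_equal] using this
  have key2 : ∀ (k : ℕ) (F : L.Functions k) (i : Fin k → ℕ) (j : ℕ),
      Structure.funMap F (f ∘ i) = f j ↔ Structure.funMap F (g ∘ i) = g j := by
    intro k F i j
    have := h (Term.equal (Term.func F fun m => Term.var (i m)) (Term.var j))
    simpa [Formula.realize_equal, Function.comp_def] using this
  have key3 : ∀ (k : ℕ) (R : L.Relations k) (i : Fin k → ℕ),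
      Structure.RelMap R (f ∘ i) ↔ Structure.RelMap R (g ∘ i) := by
    intro k R i
    have := h (R.formula fun m => Term.var (i m))
    simpa [Formula.realize_rel, Function.comp_def] using this
  set s := Function.surjInv hf with hs
  set t := Function.surjInv hg with ht
  have hfs : ∀ m, f (s m) = m := fun m => Function.surjInv_eq hf m
  have hgt : ∀ n, g (t n) = n := fun n => Function.surjInv_eq hg n
  refine ⟨⟨⟨fun m => g (s m), fun n => f (t n), ?_, ?_⟩, ?_, ?_⟩⟩
  · intro m
    simp only
    have : g (t (g (s m))) = g (s m) := hgt _
    have := (key1 (t (g (s m))) (s m)).2 this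
    rw [this, hfs]
  · intro n
    simp only
    have : f (s (f (t n))) = f (t n) := hfs _
    have := (key1 (s (f (t n))) (t n)).1 this
    rw [this, hgt]
  · intro k F x
    simp only
    have h1 : Structure.funMap F (f ∘ (fun m => s (x m))) = f (s (Structure.funMap F x)) := by
      have : f ∘ (fun m => s (x m)) = x := funext fun m => hfs (x m)
      rw [this, hfs]
    have h2 := (key2 k F (fun m => s (x m)) (s (Structure.funMap F x))).1 h1
    exact h2.symm
  · intro k R x
    simp only
    have h1 : (f ∘ fun m => s (x m)) = x := funext fun m => hfs (x m)
    have := key3 k R (fun m => s (x m))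
    rw [h1] at this
    exact this.symm

private theorem exists_countable_model_realizing {L : FirstOrder.Language.{u, v}}
    [Countable L.Symbols]
    (T : L.Theory) (q : Set (L.Formula Unit))
    (hcons : ∀ s : Finset (L.Formula Unit), ↑s ⊆ q →
      ∃ (M : Theory.ModelType.{u, v, max u v} T) (a : Unit → M.Carrier),
        ∀ ψ ∈ s, ψ.Realize a) :
    ∃ (M : Theory.ModelType.{u, v, max u v} T) (_ : Countable M.Carrier)
      (a : Unit → M.Carrier), ∀ ψ ∈ q, ψ.Realize a := by
  classical
  set T' : L[[Unit]].Theory :=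
    (L.lhomWithConstants Unit).onTheory T ∪ (Formula.equivSentence '' q) with hT'
  have hsat : T'.IsSatisfiable := by
    rw [Theory.isSatisfiable_iff_isFinitelySatisfiable]
    intro T0 hT0
    set s : Finset (L.Formula Unit) :=
      (T0.preimage Formula.equivSentence
        (Set.injOn_of_injective Formula.equivSentence.injective)).filter (· ∈ q) with hsdef
    obtain ⟨M, a, ha⟩ := hcons s (by
      intro ψ hψ
      simp only [hsdef, Finset.coe_filter, Set.mem_setOf_eq] at hψ
      exact hψ.2)
    letI : (constantsOn Unit).Structure M.Carrier := constantsOn.structure a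
    have hmod : ∀ φ ∈ (T0 : L[[Unit]].Theory), M.Carrier ⊨ φ := by
      intro φ hφ
      rcases hT0 hφ with h1 | h2
      · obtain ⟨φ₀, hφ₀, rfl⟩ := h1
        exact ((L.lhomWithConstants Unit).realize_onSentence M.Carrier φ₀).2
          (M.is_model.realize_of_mem φ₀ hφ₀)
      · obtain ⟨ψ, hψ, rfl⟩ := h2
        rw [Formula.realize_equivSentence]
        have : ψ ∈ s := by
          simp only [hsdef, Finset.mem_filter, Finset.mem_preimage]
          exact ⟨hφ, hψ⟩
        have := ha ψ this
        convert this using 2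
        rfl
    haveI : M.Carrier ⊨ (T0 : L[[Unit]].Theory) := (Theory.model_iff _).2 hmod
    exact ⟨⟨M.Carrier⟩⟩
  obtain ⟨M'⟩ := hsat
  letI : L.Structure M'.Carrier := (L.lhomWithConstants Unit).reduct M'.Carrier
  haveI : (L.lhomWithConstants Unit).IsExpansionOn M'.Carrier :=
    LHom.isExpansionOn_reduct (L.lhomWithConstants Unit) M'.Carrier
  haveI hmT : M'.Carrier ⊨ T := by
    have h1 : M'.Carrier ⊨ (L.lhomWithConstants Unit).onTheory T :=
      M'.is_model.mono Set.subset_union_left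
    exact ((L.lhomWithConstants Unit).onTheory_model T).1 h1
  set a0 : Unit → M'.Carrier := fun u => ((L.con u : M'.Carrier)) with ha0
  have hreal : ∀ ψ ∈ q, ψ.Realize a0 := by
    intro ψ hψ
    have h2 : M'.Carrier ⊨ Formula.equivSentence ψ :=
      M'.is_model.realize_of_mem _ (Set.mem_union_right _ ⟨ψ, hψ, rfl⟩)
    rw [Formula.realize_equivSentence] at h2
    exact h2
  by_cases hc : Countable M'.Carrier
  · exact ⟨⟨M'.Carrier⟩, hc, a0, hreal⟩
  · rw [not_countable_iff] at hc
    have hinf : ℵ₀ ≤ #M'.Carrier := Cardinal.aleph0_le_mk _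
    obtain ⟨S, hS1, hS2⟩ := exists_elementarySubstructure_card_eq L (Set.range a0)
      (ℵ₀ : Cardinal.{max u v}) le_rfl
      (Cardinal.lift_le.2 (Cardinal.mk_le_aleph0))
      (Cardinal.lift_le.2 (Cardinal.mk_le_aleph0))
      (Cardinal.lift_le.2 hinf)
    have hcount : Countable S := by
      rw [← Cardinal.mk_le_aleph0_iff]
      exact le_of_eq (Cardinal.lift_inj.1 hS2)
    refine ⟨⟨S⟩, hcount, fun u => ⟨a0 u, hS1 (Set.mem_range_self u)⟩, ?_⟩
    intro ψ hψ
    have h := hreal ψ hψ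
    have hco : S.subtype ∘ (fun u => (⟨a0 u, hS1 (Set.mem_range_self u)⟩ : S)) = a0 := rfl
    rw [← hco] at h
    exact (S.subtype.map_formula ψ _).1 h

/-- If a consistent countable theory has a family of partial types indexed by
subsets of `ω`, each consistent with `T` and pairwise jointly inconsistent, then `T` has
exactly `2 ^ ℵ₀` countable models up to isomorphism. -/
theorem stmt_4 {L : FirstOrder.Language.{u, v}} [Countable L.Symbols] (T : L.Theory)
    (hT : T.IsSatisfiable)
    (p : Set ℕ → Set (L.Formula Unit))
    (hcons : ∀ A : Set ℕ, ∀ s : Finset (L.Formula Unit), ↑s ⊆ p A →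
      ∃ (M : Theory.ModelType.{u, v, max u v} T) (a : Unit → M.Carrier),
        ∀ ψ ∈ s, ψ.Realize a)
    (hinc : ∀ A B : Set ℕ, A ≠ B →
      ∀ (M : Theory.ModelType.{u, v, max u v} T) (a : Unit → M.Carrier),
        ¬ ((∀ ψ ∈ p A, ψ.Realize a) ∧ (∀ ψ ∈ p B, ψ.Realize a))) :
    Cardinal.mk
      (Quot fun M N : {M : Theory.ModelType.{u, v, max u v} T // Countable M.Carrier} =>
        Nonempty (M.1.Carrier ≃[L] N.1.Carrier)) = 2 ^ aleph0 := by
  classical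
  set r : {M : Theory.ModelType.{u, v, max u v} T // Countable M.Carrier} →
      {M : Theory.ModelType.{u, v, max u v} T // Countable M.Carrier} → Prop :=
    fun M N => Nonempty (M.1.Carrier ≃[L] N.1.Carrier) with hr
  have hrequiv : Equivalence r := by
    constructor
    · exact fun M => ⟨FirstOrder.Language.Equiv.refl L M.1.Carrier⟩
    · exact fun ⟨e⟩ => ⟨e.symm⟩
    · exact fun ⟨e⟩ ⟨e'⟩ => ⟨e'.comp e⟩
  have hmkeq : ∀ m n, Quot.mk r m = Quot.mk r n → r m n := by
    intro m n h
    exact hrequiv.eqvGen_iff.1 (Quot.eq.1 h)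
  -- choose countable models realizing each partial type
  have lemA : ∀ A : Set ℕ, ∃ (M : Theory.ModelType.{u, v, max u v} T)
      (_ : Countable M.Carrier) (a : Unit → M.Carrier), ∀ ψ ∈ p A, ψ.Realize a :=
    fun A => exists_countable_model_realizing T (p A) (hcons A)
  choose MA hMAc aA hA using lemA
  set msub : Set ℕ → {M : Theory.ModelType.{u, v, max u v} T // Countable M.Carrier} :=
    fun A => ⟨MA A, hMAc A⟩ with hmsub
  set F : Set ℕ → Quot r := fun A => Quot.mk r (msub A) with hF
  haveI hQne : Nonempty (Quot r) := ⟨F ∅⟩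
  -- the canonical equivalence to the chosen representative
  have heA : ∀ A : Set ℕ, Nonempty ((MA A).Carrier ≃[L] (Quot.out (F A)).1.Carrier) := by
    intro A
    exact hmkeq _ _ ((Quot.out_eq (F A)).symm)
  have eA : ∀ A : Set ℕ, (MA A).Carrier ≃[L] (Quot.out (F A)).1.Carrier :=
    fun A => (heA A).some
  set G : Set ℕ → (Σ c : Quot r, (Quot.out c).1.Carrier) :=
    fun A => ⟨F A, eA A (aA A ())⟩ with hG
  have hGreal : ∀ A : Set ℕ, ∀ ψ ∈ p A, ψ.Realize (fun _ : Unit => (G A).2) := by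
    intro A ψ hψ
    have h0 := hA A ψ hψ
    have heq : (fun _ : Unit => (G A).2) = (eA A) ∘ (aA A) := funext fun u => rfl
    rw [heq]
    exact (StrongHomClass.realize_formula (eA A) ψ).2 h0
  have hGinj : Function.Injective G := by
    intro A B hGA
    by_contra hne
    have hx := hGreal A
    have hy := hGreal B
    rw [← hGA] at hy
    exact hinc A B hne (Quot.out (G A).1).1 (fun _ => (G A).2) ⟨hx, hy⟩
  -- lower bound
  have hlow : (2 ^ aleph0 : Cardinal.{(max u v) + 1}) ≤ #(Quot r) := by
    have h1 : #(ULift.{(max u v) + 1} (Set ℕ)) ≤ #(Σ c : Quot r, (Quot.out c).1.Carrier) :=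
      Cardinal.mk_le_of_injective (f := fun A => G A.down)
        (fun A B h => ULift.ext _ _ (hGinj h))
    have h2 : #(Σ c : Quot r, (Quot.out c).1.Carrier) ≤ #(Quot r) * ℵ₀ := by
      have hemb : ∀ c : Quot r, ∃ e : (Quot.out c).1.Carrier → ℕ, Function.Injective e := by
        intro c
        haveI := (Quot.out c).2
        exact exists_injective_nat _
      choose emb hembinj using hemb
      have hinj : Function.Injective
          (fun x : (Σ c : Quot r, (Quot.out c).1.Carrier) =>
            (x.1, ULift.up.{(max u v) + 1} (emb x.1 x.2))) := by
        rintro ⟨c, x⟩ ⟨c', y⟩ hxy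
        have h1 : c = c' := congrArg Prod.fst hxy
        subst h1
        have h2 : emb c x = emb c y := by
          have := congrArg Prod.snd hxy
          simpa using this
        rw [hembinj c h2]
      calc #(Σ c : Quot r, (Quot.out c).1.Carrier)
          ≤ #(Quot r × ULift.{(max u v) + 1} ℕ) := Cardinal.mk_le_of_injective hinj
        _ = #(Quot r) * ℵ₀ := by simp
    have h3 : #(ULift.{(max u v) + 1} (Set ℕ)) = (2 ^ aleph0 : Cardinal.{(max u v) + 1}) := by
      simp [Cardinal.mk_set]
    rw [h3] at h1
    have h4 : (2 ^ aleph0 : Cardinal.{(max u v) + 1}) ≤ max (#(Quot r)) ℵ₀ :=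
      (h1.trans h2).trans (Cardinal.mul_le_max_of_aleph0_le_right le_rfl)
    rcases le_max_iff.1 h4 with h | h
    · exact h
    · exact absurd h (not_le.2 (by simpa using Cardinal.cantor (ℵ₀ : Cardinal.{(max u v) + 1})))
  -- upper bound
  have hup : #(Quot r) ≤ (2 ^ aleph0 : Cardinal.{(max u v) + 1}) := by
    set P : Set (L.Formula ℕ) → Quot r → Prop := fun S c =>
      ∃ (m : {M : Theory.ModelType.{u, v, max u v} T // Countable M.Carrier})
        (f : ℕ → m.1.Carrier),
        Function.Surjective f ∧ S = {φ | φ.Realize f} ∧ Quot.mk r m = c with hP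
    set H : Set (L.Formula ℕ) → Quot r := fun S =>
      if hc : ∃ c, P S c then hc.choose else Classical.arbitrary _ with hH
    have hsurj : Function.Surjective H := by
      intro c
      obtain ⟨m, hm⟩ := Quot.exists_rep c
      haveI := m.2
      obtain ⟨f, hf⟩ := exists_surjective_nat m.1.Carrier
      set S : Set (L.Formula ℕ) := {φ | φ.Realize f} with hS
      have hex : ∃ c', P S c' := ⟨c, m, f, hf, rfl, hm⟩
      refine ⟨S, ?_⟩
      have hspec := hex.choose_spec
      obtain ⟨m', f', hf', hSeq, hmk⟩ := hspec
      have hiff : ∀ φ : L.Formula ℕ, φ.Realize f ↔ φ.Realize f' := by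
        intro φ
        have := Set.ext_iff.1 hSeq φ
        simpa [hS] using this
      obtain ⟨e⟩ := iso_of_diagram hf hf' hiff
      have hmm' : Quot.mk r m = Quot.mk r m' := Quot.sound ⟨e⟩
      have : H S = hex.choose := dif_pos hex
      rw [this, ← hmk, ← hmm', hm]
    have hcard : #(L.Formula ℕ) ≤ ℵ₀ := by
      have hinj : Function.Injective
          (fun φ : L.Formula ℕ => (⟨0, φ⟩ : Σ n, L.BoundedFormula ℕ n)) := by
        intro φ ψ h
        simpa using h
      refine (Cardinal.mk_le_of_injective hinj).trans ?_
      refine (BoundedFormula.card_le).trans ?_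
      have hLcard : L.card ≤ ℵ₀ := Cardinal.mk_le_aleph0
      simp only [Cardinal.mk_nat, Cardinal.lift_aleph0, Cardinal.lift_id, max_le_iff]
      constructor
      · exact le_rfl
      · calc ℵ₀ + Cardinal.lift.{0} L.card ≤ ℵ₀ + ℵ₀ := by
              gcongr
              simpa using hLcard
          _ = ℵ₀ := Cardinal.aleph0_add_aleph0
    have hsurj' : Function.Surjective
        (fun S : ULift.{(max u v) + 1} (Set (L.Formula ℕ)) => H S.down) := by
      intro c
      obtain ⟨S, hS⟩ := hsurj c
      exact ⟨ULift.up S, hS⟩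
    have h5 : #(Quot r) ≤ #(ULift.{(max u v) + 1} (Set (L.Formula ℕ))) :=
      Cardinal.mk_le_of_surjective hsurj'
    refine h5.trans ?_
    rw [Cardinal.mk_uLift, Cardinal.mk_set]
    calc Cardinal.lift.{(max u v) + 1} (2 ^ #(L.Formula ℕ))
        ≤ Cardinal.lift.{(max u v) + 1} (2 ^ (ℵ₀ : Cardinal.{max u v})) := by
          exact Cardinal.lift_le.2 (Cardinal.power_le_power_left two_ne_zero hcard)
      _ = 2 ^ aleph0 := by
          rw [Cardinal.lift_two_power, Cardinal.lift_aleph0]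
  exact le_antisymm hup hlow
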